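/- Let J be an unbounded subinterval of ℝ and g : J → ℝ a locally absolutely continuous function on J with derivative g′. Assume g′ ∈ L^1(J), that g′ is of locally bounded variation on J, and that there exist a constant V_J > 0 and r ∈ (0,1] such that the total variation of g′ on the interval with endpoints a and b is at most V_J·|a − b|^r for all a, b ∈ J. Then g′ ∈ L^∞(J) and ‖g′‖_{J,∞} ≤ ((r+1)/r^{r/(r+1)})·‖g′‖_{J,1}^{r/(r+1)}·V_J^{1/(r+1)}. -/

import Mathlib

open MeasureTheory Set

lemma landau_aux_integral (h r M V : ℝ) (hh : 0 ≤ h) (hr0 : 0 < r) :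
    ∫ s in (0:ℝ)..h, (M - V * |s| ^ r) = M * h - V * (h ^ (r + 1) / (r + 1)) := by
  have hcongr : ∀ s ∈ uIcc (0:ℝ) h, M - V * |s| ^ r = M - V * s ^ r := by
    intro s hs
    rw [uIcc_of_le hh] at hs
    rw [abs_of_nonneg hs.1]
  rw [intervalIntegral.integral_congr hcongr]
  have hint1 : IntervalIntegrable (fun _ : ℝ => M) volume 0 h := intervalIntegrable_const
  have hint2 : IntervalIntegrable (fun s : ℝ => V * s ^ r) volume 0 h :=
    (intervalIntegral.intervalIntegrable_rpow (Or.inl hr0.le)).const_mul V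
  rw [intervalIntegral.integral_sub hint1 hint2, intervalIntegral.integral_const,
    intervalIntegral.integral_const_mul, integral_rpow (Or.inl (by linarith))]
  rw [Real.zero_rpow (by linarith : r + 1 ≠ 0), smul_eq_mul]
  ring

/-- **Theorem 4.** Let `J` be an unbounded interval of `ℝ` and `g : J → ℝ` locally absolutely
continuous with derivative `g'`. If `g' ∈ L^1(J)`, `g'` is of locally bounded variation and its
variation on any subinterval with endpoints `a, b ∈ J` is `≤ V |a-b|^r` with `V > 0`,
`r ∈ (0,1]`, then `g' ∈ L^∞(J)` and
`‖g'‖_{J,∞} ≤ ((r+1)/r^{r/(r+1)}) ‖g'‖_{J,1}^{r/(r+1)} V^{1/(r+1)}`. -/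
theorem landau_sup_norm_of_variation_bound_L1
    (J : Set ℝ) (hJ : J.OrdConnected) (hJu : ¬ Bornology.IsBounded J)
    (g g' : ℝ → ℝ) (hderiv : ∀ x ∈ J, HasDerivWithinAt g (g' x) J x)
    (hg'1 : MemLp g' 1 (volume.restrict J))
    (hbv : ∀ a ∈ J, ∀ b ∈ J, BoundedVariationOn g' (uIcc a b))
    (V r : ℝ) (hV : 0 < V) (hr : r ∈ Ioc (0 : ℝ) 1)
    (hvar : ∀ a ∈ J, ∀ b ∈ J,
      eVariationOn g' (uIcc a b) ≤ ENNReal.ofReal (V * |a - b| ^ r)) :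
    MemLp g' ⊤ (volume.restrict J) ∧
      (eLpNorm g' ⊤ (volume.restrict J)).toReal ≤
        (r + 1) / r ^ (r / (r + 1)) *
          (eLpNorm g' 1 (volume.restrict J)).toReal ^ (r / (r + 1)) *
            V ^ (1 / (r + 1)) := by
  obtain ⟨hr0, hr1⟩ := hr
  have hr10 : (0:ℝ) < r + 1 := by linarith
  have hJm : MeasurableSet J := hJ.measurableSet
  have hint : IntegrableOn g' J := memLp_one_iff_integrable.mp hg'1
  set N : ℝ := (eLpNorm g' 1 (volume.restrict J)).toReal with hNdef
  have hN_eq : N = ∫ t in J, |g' t| := by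
    rw [hNdef, eLpNorm_one_eq_lintegral_enorm,
      ← integral_norm_eq_lintegral_enorm hg'1.aestronglyMeasurable]
    simp [Real.norm_eq_abs]
  have hN0 : 0 ≤ N := ENNReal.toReal_nonneg
  set q : ℝ := r / (r + 1) with hqdef
  have hq0 : 0 < q := by positivity
  set C : ℝ := (r + 1) / r ^ q * N ^ q * V ^ (1 / (r + 1)) with hCdef
  have hC0 : 0 ≤ C := by positivity
  -- Hölder continuity of g'
  have holder : ∀ a ∈ J, ∀ b ∈ J, |g' a - g' b| ≤ V * |a - b| ^ r := by
    intro a ha b hb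
    have h1 : edist (g' a) (g' b) ≤ eVariationOn g' (uIcc a b) :=
      eVariationOn.edist_le g' left_mem_uIcc right_mem_uIcc
    have h2 := h1.trans (hvar a ha b hb)
    rw [edist_dist] at h2
    have hnn : 0 ≤ V * |a - b| ^ r := by positivity
    have := (ENNReal.ofReal_le_ofReal_iff hnn).mp h2
    simpa [Real.dist_eq] using this
  -- direction of unboundedness
  have hJdir : ∀ x ∈ J, ∀ h : ℝ, 0 < h → Icc x (x + h) ⊆ J ∨ Icc (x - h) x ⊆ J := by
    intro x hx h hh
    rw [isBounded_iff_forall_norm_le] at hJu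
    push_neg at hJu
    obtain ⟨y, hy, hylarge⟩ := hJu (|x| + h)
    rw [Real.norm_eq_abs] at hylarge
    rcases le_or_gt (x + h) y with hc | hc
    · left
      exact fun t ht => hJ.out hx hy ⟨ht.1, ht.2.trans hc⟩
    · right
      have hyx : y ≤ x - h := by
        rcases le_or_gt 0 y with h0 | h0
        · exfalso
          have : |y| = y := abs_of_nonneg h0
          have : y > |x| + h := by rwa [this] at hylarge
          have := le_abs_self x
          linarith
        · have : |y| = -y := abs_of_neg h0
          rw [this] at hylarge
          have := neg_abs_le x
          linarith
      exact fun t ht => hJ.out hy hx ⟨hyx.trans ht.1, ht.2⟩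
  -- key pointwise bound
  have key : ∀ x ∈ J, |g' x| ≤ C := by
    intro x hx
    set M : ℝ := |g' x| with hMdef
    rcases le_or_gt M 0 with hM | hM
    · exact hM.trans hC0
    -- choose h
    set h : ℝ := (M / V) ^ (1 / r) with hhdef
    have hMV : 0 < M / V := div_pos hM hV
    have hh : 0 < h := Real.rpow_pos_of_pos hMV _
    have hhr : h ^ r = M / V := by
      rw [hhdef, ← Real.rpow_mul hMV.le, one_div, inv_mul_cancel₀ hr0.ne', Real.rpow_one]
    -- the interval
    have hmain : ∀ u v : ℝ, u ≤ v → v - u = h → Icc u v ⊆ J → (x = u ∨ x = v) →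
        M * h * (r / (r + 1)) ≤ N := by
      intro u v huv hvu hsub hxe
      -- pointwise lower bound on |g'| on [u,v]
      have hpt : ∀ t ∈ Icc u v, M - V * |t - x| ^ r ≤ |g' t| := by
        intro t ht
        have htJ : t ∈ J := hsub ht
        have := holder x hx t htJ
        have habs : |g' x| - |g' t| ≤ |g' x - g' t| := abs_sub_abs_le_abs_sub _ _
        have hxt : |x - t| = |t - x| := abs_sub_comm _ _
        rw [hxt] at this
        linarith [habs.trans this]
      -- integrability of lower function
      have hcont : ContinuousOn (fun t => M - V * |t - x| ^ r) (Icc u v) := by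
        apply ContinuousOn.sub continuousOn_const
        apply ContinuousOn.mul continuousOn_const
        intro t _
        apply ContinuousAt.continuousWithinAt
        exact (Real.continuousAt_rpow_const _ _ (Or.inr hr0.le)).comp
          ((continuous_abs.comp (continuous_id.sub continuous_const)).continuousAt)
      have hintlow : IntegrableOn (fun t => M - V * |t - x| ^ r) (Icc u v) :=
        hcont.integrableOn_compact isCompact_Icc
      have hintg : IntegrableOn (fun t => |g' t|) (Icc u v) :=
        (hint.mono_set hsub).abs
      have step1 : ∫ t in Icc u v, (M - V * |t - x| ^ r) ≤ ∫ t in Icc u v, |g' t| :=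
        setIntegral_mono_on hintlow hintg measurableSet_Icc hpt
      have step2 : ∫ t in Icc u v, |g' t| ≤ ∫ t in J, |g' t| := by
        apply setIntegral_mono_set hint.abs
        · filter_upwards with t using abs_nonneg _
        · exact HasSubset.Subset.eventuallyLE hsub
      -- compute the lower integral
      have hcomp : ∫ t in Icc u v, (M - V * |t - x| ^ r) =
          M * h - V * (h ^ (r + 1) / (r + 1)) := by
        rw [integral_Icc_eq_integral_Ioc, ← intervalIntegral.integral_of_le huv]
        rcases hxe with rfl | rfl
        · have := intervalIntegral.integral_comp_sub_right
            (fun s => M - V * |s| ^ r) x (a := x) (b := v)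
          rw [this, sub_self, show v - x = h by linarith]
          exact landau_aux_integral h r M V hh.le hr0
        · have h1 : ∀ t, |t - x| = |x - t| := fun t => abs_sub_comm _ _
          simp_rw [h1]
          have := intervalIntegral.integral_comp_sub_left
            (fun s => M - V * |s| ^ r) x (a := u) (b := x)
          rw [this, sub_self, show x - u = h by linarith]
          exact landau_aux_integral h r M V hh.le hr0
      have hVh : V * (h ^ (r + 1) / (r + 1)) = M * h / (r + 1) := by
        have : h ^ (r + 1) = (M / V) * h := by
          rw [Real.rpow_add hh, Real.rpow_one, hhr]
        rw [this]
        field_simp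
      have hfin : M * h * (r / (r + 1)) = M * h - M * h / (r + 1) := by
        field_simp
        ring
      rw [hfin, ← hVh, ← hcomp, hN_eq]
      exact step1.trans step2
    have hbound : M * h * (r / (r + 1)) ≤ N := by
      rcases hJdir x hx h hh with hs | hs
      · exact hmain x (x + h) (by linarith) (by ring) hs (Or.inl rfl)
      · exact hmain (x - h) x (by linarith) (by ring) hs (Or.inr rfl)
    -- algebra: conclude M ≤ C
    have hMh : M * h = M ^ ((r + 1) / r) / V ^ (1 / r) := by
      rw [hhdef, Real.div_rpow hM.le hV.le, mul_div_assoc']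
      congr 1
      rw [show (r + 1) / r = 1 + 1 / r by field_simp, Real.rpow_add hM, Real.rpow_one]
    rw [hMh] at hbound
    have hV1 : (0:ℝ) < V ^ (1 / r) := Real.rpow_pos_of_pos hV _
    have hrr : (0:ℝ) < r / (r + 1) := by positivity
    rw [div_mul_eq_mul_div, div_le_iff₀ hV1] at hbound
    have h1 : M ^ ((r + 1) / r) ≤ (r + 1) / r * N * V ^ (1 / r) := by
      have h1' := (le_div_iff₀ hrr).mpr hbound
      calc M ^ ((r + 1) / r) ≤ N * V ^ (1 / r) / (r / (r + 1)) := h1'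
        _ = (r + 1) / r * N * V ^ (1 / r) := by field_simp
    have h3 : M = (M ^ ((r + 1) / r)) ^ q := by
      rw [← Real.rpow_mul hM.le,
        show (r + 1) / r * q = 1 by rw [hqdef]; field_simp, Real.rpow_one]
    have h4 : M ≤ ((r + 1) / r * N * V ^ (1 / r)) ^ q := by
      rw [h3]
      exact Real.rpow_le_rpow (by positivity) h1 hq0.le
    have h5 : ((r + 1) / r * N * V ^ (1 / r)) ^ q =
        (r + 1) ^ q / r ^ q * N ^ q * V ^ (1 / (r + 1)) := by
      rw [Real.mul_rpow (by positivity) (Real.rpow_nonneg hV.le _),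
        Real.mul_rpow (by positivity) hN0,
        Real.div_rpow (by linarith) hr0.le,
        ← Real.rpow_mul hV.le,
        show 1 / r * q = 1 / (r + 1) by rw [hqdef]; field_simp]
    have h6 : (r + 1) ^ q / r ^ q ≤ (r + 1) / r ^ q := by
      have h7 : (r + 1) ^ q ≤ (r + 1) ^ (1:ℝ) :=
        Real.rpow_le_rpow_of_exponent_le (by linarith)
          (by rw [hqdef, div_le_one hr10]; linarith)
      rw [Real.rpow_one] at h7
      gcongr
    calc M ≤ ((r + 1) / r * N * V ^ (1 / r)) ^ q := h4
      _ = (r + 1) ^ q / r ^ q * N ^ q * V ^ (1 / (r + 1)) := h5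
      _ ≤ C := by
          rw [hCdef]
          exact mul_le_mul_of_nonneg_right
            (mul_le_mul_of_nonneg_right h6 (by positivity)) (by positivity)
  -- conclude
  have hae : ∀ᵐ t ∂(volume.restrict J), ‖g' t‖ ≤ C := by
    rw [ae_restrict_iff' hJm]
    filter_upwards with t ht
    simpa [Real.norm_eq_abs] using key t ht
  have hess : eLpNorm g' ⊤ (volume.restrict J) ≤ ENNReal.ofReal C := by
    rw [eLpNorm_exponent_top]
    exact eLpNormEssSup_le_of_ae_bound hae
  refine ⟨⟨hg'1.aestronglyMeasurable, hess.trans_lt ENNReal.ofReal_lt_top⟩, ?_⟩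
  exact ENNReal.toReal_le_of_le_ofReal hC0 hess
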